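/- arXiv:2101.07276 — 3 statements merged into one kernel-verified Lean document; each statement's English description precedes it below -/
import Mathlib

section
/- Let A be a linear operator on H_N that anticommutes with Π^x and satisfies Π^z A Π^z = εA for some ε ∈ {+1,−1} (as holds for any product of Pauli operators anticommuting with Π^x). Then |⟨g_1| A |g_2⟩| ≤ |⟨s_{p_1}| A Π^z |s_{p_2}⟩|. -/
open Complex BigOperators Finset

namespace SpinChain

/-- Spin configurations on `N` sites (sites mod `N`): `true` = +1, `false` = −1. -/
abbrev Config (N : ℕ) := ZMod N → Bool

/-- The Hilbert space `H_N`: complex functions on spin configurations. -/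
abbrev HS (N : ℕ) := Config N → ℂ

/-- The ±1 value of a spin. -/
def sgn (b : Bool) : ℂ := if b then 1 else -1

/-- Standard basis vector `e_s`. -/
def basis (N : ℕ) [NeZero N] (s : Config N) : HS N := fun t => if t = s then 1 else 0

/-- Inner product `⟨f|g⟩ = ∑_s conj (f s) * g s` (antilinear in the first argument). -/
noncomputable def braket (N : ℕ) [NeZero N] (f g : HS N) : ℂ :=
  ∑ s, (starRingEnd ℂ) (f s) * g s

/-- Flip the spin at site `j`. -/
def flipAt (N : ℕ) (j : ZMod N) (s : Config N) : Config N :=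
  Function.update s j (!(s j))

/-- Pauli operator σ^x_j : acts diagonally, `σ^x_j e_s = s(j) e_s`. -/
def sigmaX (N : ℕ) (j : ZMod N) : Module.End ℂ (HS N) where
  toFun f := fun s => sgn (s j) * f s
  map_add' f g := by funext s; simp [mul_add]
  map_smul' c f := by funext s; simp [smul_eq_mul]; ring

/-- Pauli operator σ^z_j : flips the spin at site `j`, `σ^z_j e_s = e_{s'}`. -/
def sigmaZ (N : ℕ) (j : ZMod N) : Module.End ℂ (HS N) where
  toFun f := fun s => f (flipAt N j s)
  map_add' _ _ := rfl
  map_smul' _ _ := rfl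

/-- Pauli operator σ^y_j = i σ^x_j σ^z_j. -/
noncomputable def sigmaY (N : ℕ) (j : ZMod N) : Module.End ℂ (HS N) :=
  Complex.I • (sigmaX N j * sigmaZ N j)

/-- Kinds of single-site operators: the identity and the three Pauli matrices. -/
inductive PKind | id | x | y | z
  deriving DecidableEq

/-- Single-site operator of a given kind at site `j`. -/
noncomputable def pauli (N : ℕ) : PKind → ZMod N → Module.End ℂ (HS N)
  | PKind.id => fun _ => 1
  | PKind.x => sigmaX N
  | PKind.y => sigmaY N
  | PKind.z => sigmaZ N

/-- Parity operator Π^α = σ^α_1 σ^α_2 ⋯ σ^α_N. -/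
noncomputable def parity (N : ℕ) (α : PKind) : Module.End ℂ (HS N) :=
  ((List.range N).map (fun j => pauli N α ((j + 1 : ℕ) : ZMod N))).prod

/-- The configuration of the kink state |j⟩: `s(j+r) = (−1)^{r+1}` for `r = 1,…,N`
(the single ferromagnetic bond is between sites `j` and `j+1`). -/
def kinkConfig (N : ℕ) (j : ZMod N) : Config N :=
  fun k => ((k - j).val == 0) || ((k - j).val % 2 == 1)

/-- Kink state |j⟩. -/
def kink (N : ℕ) [NeZero N] (j : ZMod N) : HS N := basis N (kinkConfig N j)

/-- Momentum state `|s_p⟩ = N^{-1/2} ∑_{j=1}^N e^{i p j} |j⟩`. -/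
noncomputable def momState (N : ℕ) [NeZero N] (p : ℝ) : HS N :=
  (Real.sqrt N : ℂ)⁻¹ • ∑ j ∈ Finset.range N,
    Complex.exp (Complex.I * p * ((j : ℂ) + 1)) • kink N ((j + 1 : ℕ) : ZMod N)


/-! ### Auxiliary lemmas -/

lemma sgn_mul_self (b : Bool) : sgn b * sgn b = 1 := by cases b <;> simp [sgn]

lemma conj_sgn (b : Bool) : (starRingEnd ℂ) (sgn b) = sgn b := by cases b <;> simp [sgn]

lemma sgn_not (b : Bool) : sgn (!b) = - sgn b := by cases b <;> simp [sgn]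

noncomputable def cfun (N : ℕ) [NeZero N] (s : Config N) : ℂ := ∏ k : ZMod N, sgn (s k)

lemma cfun_mul_self (N : ℕ) [NeZero N] (s : Config N) : cfun N s * cfun N s = 1 := by
  rw [cfun, ← Finset.prod_mul_distrib]
  simp [sgn_mul_self]

lemma conj_cfun (N : ℕ) [NeZero N] (s : Config N) :
    (starRingEnd ℂ) (cfun N s) = cfun N s := by
  rw [cfun, map_prod]; simp [conj_sgn]

lemma cfun_neg (N : ℕ) [NeZero N] (hN : Odd N) (s : Config N) :
    cfun N (fun k => !(s k)) = - cfun N s := by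
  rw [cfun]
  simp only [sgn_not]
  have : ∀ k : ZMod N, -sgn (s k) = (-1) * sgn (s k) := fun k => by ring
  simp only [this]
  rw [Finset.prod_mul_distrib, Finset.prod_const]
  simp [ZMod.card, hN.neg_one_pow, cfun]

lemma list_prod_range {M : Type*} [CommMonoid M] (n : ℕ) (h : ℕ → M) :
    ((List.range n).map h).prod = ∏ j ∈ Finset.range n, h j := by
  induction n with
  | zero => simp
  | succ n ih => rw [List.range_succ, Finset.prod_range_succ, List.map_append, List.prod_append]; simp [ih]

lemma cast_succ_bij (N : ℕ) [NeZero N] (F : ZMod N → ℂ) :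
    ∏ j ∈ Finset.range N, F ((j + 1 : ℕ) : ZMod N) = ∏ k : ZMod N, F k := by
  apply Finset.prod_nbij' (fun j => ((j + 1 : ℕ) : ZMod N)) (fun k => (k - 1).val)
  · intro a _; exact Finset.mem_univ _
  · intro k _; exact Finset.mem_range.mpr (ZMod.val_lt _)
  · intro j hj
    have hj' := Finset.mem_range.mp hj
    push_cast
    have : ((j : ZMod N) + 1 - 1) = (j : ZMod N) := by ring
    rw [this, ZMod.val_natCast_of_lt hj']
  · intro k _
    push_cast
    simp [ZMod.natCast_val, ZMod.cast_id]
  · intro j _; rfl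

lemma prodX_list (N : ℕ) [NeZero N] (l : List (ZMod N)) (f : HS N) (s : Config N) :
    ((l.map (sigmaX N)).prod) f s = (l.map (fun j => sgn (s j))).prod * f s := by
  induction l with
  | nil => simp
  | cons j l ih =>
    simp only [List.map_cons, List.prod_cons, Module.End.mul_apply]
    show sgn (s j) * (((l.map (sigmaX N)).prod) f s) = _
    rw [ih]; ring

lemma parityX_apply (N : ℕ) [NeZero N] (f : HS N) (s : Config N) :
    parity N PKind.x f s = cfun N s * f s := by
  have h1 : parity N PKind.x =
      ((((List.range N).map (fun j => ((j + 1 : ℕ) : ZMod N))).map (sigmaX N)).prod) := by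
    rw [List.map_map]; rfl
  rw [h1, prodX_list, List.map_map]
  congr 1
  rw [list_prod_range]
  exact cast_succ_bij N (fun k => sgn (s k))

lemma prodZ_list (N : ℕ) [NeZero N] (l : List (ZMod N)) (f : HS N) (s : Config N) :
    ((l.map (sigmaZ N)).prod) f s = f (l.foldl (fun t j => flipAt N j t) s) := by
  induction l generalizing s with
  | nil => simp
  | cons j l ih =>
    simp only [List.map_cons, List.prod_cons, Module.End.mul_apply, List.foldl_cons]
    show ((l.map (sigmaZ N)).prod) f (flipAt N j s) = _
    rw [ih]

lemma foldl_flip (N : ℕ) (l : List (ZMod N)) (hl : l.Nodup) (s : Config N) (k : ZMod N) :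
    l.foldl (fun t j => flipAt N j t) s k = if k ∈ l then !(s k) else s k := by
  induction l generalizing s with
  | nil => simp
  | cons j l ih =>
    have hnd := List.nodup_cons.mp hl
    simp only [List.foldl_cons]
    rw [ih hnd.2]
    by_cases hk : k ∈ l
    · have hkj : k ≠ j := fun h => hnd.1 (h ▸ hk)
      simp [hk, flipAt, Function.update_apply, hkj, List.mem_cons]
    · by_cases hkj : k = j
      · subst hkj
        simp [hk, flipAt, Function.update_apply]
      · simp [hk, flipAt, Function.update_apply, hkj, List.mem_cons]

lemma L_nodup (N : ℕ) :
    ((List.range N).map (fun j => ((j + 1 : ℕ) : ZMod N))).Nodup := by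
  refine List.Nodup.map_on ?_ List.nodup_range
  intro a ha b hb hab
  rw [List.mem_range] at ha hb
  have h : (a + 1) % N = (b + 1) % N := by
    rwa [ZMod.natCast_eq_natCast_iff'] at hab
  have key : ∀ c, c < N → (c + 1) % N = if c + 1 = N then 0 else c + 1 := by
    intro c hc
    split
    · simp [*]
    · exact Nat.mod_eq_of_lt (by omega)
  rw [key a ha, key b hb] at h
  split at h <;> split at h <;> omega

lemma L_mem (N : ℕ) [NeZero N] (k : ZMod N) :
    k ∈ (List.range N).map (fun j => ((j + 1 : ℕ) : ZMod N)) := by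
  rw [List.mem_map]
  refine ⟨(k - 1).val, List.mem_range.mpr (ZMod.val_lt _), ?_⟩
  push_cast
  simp [ZMod.natCast_val, ZMod.cast_id]

lemma parityZ_apply (N : ℕ) [NeZero N] (f : HS N) (s : Config N) :
    parity N PKind.z f s = f (fun k => !(s k)) := by
  have h1 : parity N PKind.z =
      ((((List.range N).map (fun j => ((j + 1 : ℕ) : ZMod N))).map (sigmaZ N)).prod) := by
    rw [List.map_map]; rfl
  rw [h1, prodZ_list]
  congr 1
  funext k
  rw [foldl_flip N _ (L_nodup N), if_pos (L_mem N k)]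

lemma braket_add_left (N : ℕ) [NeZero N] (f f' g : HS N) :
    braket N (f + f') g = braket N f g + braket N f' g := by
  simp [braket, add_mul, Finset.sum_add_distrib]

lemma braket_smul_left (N : ℕ) [NeZero N] (a : ℂ) (f g : HS N) :
    braket N (a • f) g = (starRingEnd ℂ) a * braket N f g := by
  simp [braket, Finset.mul_sum, mul_assoc]

lemma braket_add_right (N : ℕ) [NeZero N] (f g g' : HS N) :
    braket N f (g + g') = braket N f g + braket N f g' := by
  simp [braket, mul_add, Finset.sum_add_distrib]

lemma braket_smul_right (N : ℕ) [NeZero N] (a : ℂ) (f g : HS N) :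
    braket N f (a • g) = a * braket N f g := by
  simp [braket, Finset.mul_sum]
  exact Finset.sum_congr rfl fun s _ => by ring

lemma braket_neg_right (N : ℕ) [NeZero N] (f g : HS N) :
    braket N f (-g) = - braket N f g := by
  simp [braket, Finset.sum_neg_distrib]

lemma braket_parityX_left (N : ℕ) [NeZero N] (f g : HS N) :
    braket N (parity N PKind.x f) g = braket N f (parity N PKind.x g) := by
  unfold braket
  refine Finset.sum_congr rfl fun s _ => ?_
  rw [parityX_apply, parityX_apply, map_mul, conj_cfun]
  ring

lemma braket_parityZ_left (N : ℕ) [NeZero N] (f g : HS N) :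
    braket N (parity N PKind.z f) g = braket N f (parity N PKind.z g) := by
  unfold braket
  have inv : Function.Involutive (fun s : Config N => fun k => !(s k)) := by
    intro s; funext k; simp
  refine Fintype.sum_equiv inv.toPerm _ _ fun s => ?_
  rw [parityZ_apply, parityZ_apply]
  have : (fun k => !((fun k => !(s k)) k)) = s := by funext k; simp
  simp only [Function.Involutive.coe_toPerm]
  rw [this]

lemma parityZ_parityZ (N : ℕ) [NeZero N] (f : HS N) :
    parity N PKind.z (parity N PKind.z f) = f := by
  funext s
  rw [parityZ_apply, parityZ_apply]
  congr 1
  funext k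
  simp

lemma parityXZ_anti (N : ℕ) [NeZero N] (hN : Odd N) (f : HS N) :
    parity N PKind.x (parity N PKind.z f) = - parity N PKind.z (parity N PKind.x f) := by
  funext s
  rw [parityX_apply, parityZ_apply]
  show _ = -(parity N PKind.z (parity N PKind.x f) s)
  rw [parityZ_apply, parityX_apply, cfun_neg N hN]
  ring

noncomputable def eta (N : ℕ) [NeZero N] : ℂ := cfun N (kinkConfig N 0)

lemma cfun_kink (N : ℕ) [NeZero N] (j : ZMod N) : cfun N (kinkConfig N j) = eta N := by
  unfold cfun eta
  refine Fintype.prod_equiv (Equiv.subRight j) _ _ fun k => ?_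
  congr 1
  simp [kinkConfig, Equiv.subRight]

lemma conj_eta (N : ℕ) [NeZero N] : (starRingEnd ℂ) (eta N) = eta N := conj_cfun N _

lemma eta_mul_self (N : ℕ) [NeZero N] : eta N * eta N = 1 := cfun_mul_self N _

lemma parityX_kink (N : ℕ) [NeZero N] (j : ZMod N) :
    parity N PKind.x (kink N j) = eta N • kink N j := by
  funext s
  rw [parityX_apply]
  show cfun N s * kink N j s = eta N * kink N j s
  by_cases h : s = kinkConfig N j
  · subst h; rw [cfun_kink]
  · simp [kink, basis, h]

lemma parityX_mom (N : ℕ) [NeZero N] (p : ℝ) :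
    parity N PKind.x (momState N p) = eta N • momState N p := by
  unfold momState
  rw [map_smul, map_sum]
  simp only [map_smul, parityX_kink, smul_smul, Finset.smul_sum]
  refine Finset.sum_congr rfl fun j _ => ?_
  congr 1
  ring

lemma ortho (N : ℕ) [NeZero N] (A : Module.End ℂ (HS N))
    (hanti : A * parity N PKind.x = -(parity N PKind.x * A))
    (a : ℂ) (ha : (starRingEnd ℂ) a = a) (ha2 : a * a = 1) (f g : HS N)
    (hf : parity N PKind.x f = a • f) (hg : parity N PKind.x g = a • g) :
    braket N f (A g) = 0 := by
  have h1 : braket N f (A (parity N PKind.x g)) = a * braket N f (A g) := by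
    rw [hg, map_smul, braket_smul_right]
  have h2 : braket N f (A (parity N PKind.x g)) = -(a * braket N f (A g)) := by
    have hA : A (parity N PKind.x g) = -(parity N PKind.x (A g)) := by
      have := congrArg (fun T : Module.End ℂ (HS N) => T g) hanti
      simpa [Module.End.mul_apply] using this
    rw [hA, braket_neg_right, ← braket_parityX_left, hf, braket_smul_left, ha]
  have ha0 : a ≠ 0 := by
    intro h; rw [h] at ha2; simp at ha2
  have := h1.symm.trans h2
  have h3 : a * braket N f (A g) = 0 := by linear_combination (1/2 : ℂ) * this
  exact (mul_eq_zero.mp h3).resolve_left ha0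

/-- If `A` anticommutes with `Π^x` and `Π^z A Π^z = εA` with `ε ∈ {±1}`,
then `|⟨g₁|A|g₂⟩| ≤ |⟨s_{p₁}|A Π^z|s_{p₂}⟩|`. -/
theorem statement_3 (N : ℕ) [NeZero N] (hN : Odd N)
    (A : Module.End ℂ (HS N))
    (hanti : A * parity N PKind.x = -(parity N PKind.x * A))
    (ε : ℂ) (hε : ε = 1 ∨ ε = -1)
    (hz : parity N PKind.z * A * parity N PKind.z = ε • A)
    (k₁ k₂ : ℕ) (hk₁ : k₁ < N) (hk₂ : k₂ < N)
    (p₁ p₂ : ℝ) (hp₁ : p₁ = 2 * Real.pi * k₁ / N) (hp₂ : p₂ = 2 * Real.pi * k₂ / N)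
    (u₁ v₁ u₂ v₂ : ℂ)
    (hu₁ : ‖u₁‖ ^ 2 + ‖v₁‖ ^ 2 = 1)
    (hu₂ : ‖u₂‖ ^ 2 + ‖v₂‖ ^ 2 = 1)
    (g₁ g₂ : HS N)
    (hg₁ : g₁ = u₁ • momState N p₁ + v₁ • parity N PKind.z (momState N p₁))
    (hg₂ : g₂ = u₂ • momState N p₂ + v₂ • parity N PKind.z (momState N p₂)) :
    ‖braket N g₁ (A g₂)‖ ≤
      ‖braket N (momState N p₁) ((A * parity N PKind.z) (momState N p₂))‖ := by
  set Q := parity N PKind.z with hQ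
  set m₁ := momState N p₁ with hm₁
  set m₂ := momState N p₂ with hm₂
  set M := braket N m₁ (A (Q m₂)) with hM
  have hη := conj_eta N
  have hη2 := eta_mul_self N
  have he₁ : parity N PKind.x m₁ = eta N • m₁ := parityX_mom N p₁
  have he₂ : parity N PKind.x m₂ = eta N • m₂ := parityX_mom N p₂
  have heQ : ∀ m : HS N, parity N PKind.x m = eta N • m →
      parity N PKind.x (Q m) = (-eta N) • Q m := by
    intro m hm
    rw [hQ, parityXZ_anti N hN, hm, map_smul, neg_smul]
  have x0 : braket N m₁ (A m₂) = 0 :=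
    ortho N A hanti (eta N) hη hη2 m₁ m₂ he₁ he₂
  have w0 : braket N (Q m₁) (A (Q m₂)) = 0 := by
    refine ortho N A hanti (-eta N) (by rw [map_neg, hη]) (by rw [neg_mul_neg, hη2])
      (Q m₁) (Q m₂) (heQ m₁ he₁) (heQ m₂ he₂)
  have y : braket N (Q m₁) (A m₂) = ε * M := by
    rw [braket_parityZ_left]
    have hQA : Q (A m₂) = ε • A (Q m₂) := by
      have h := congrArg (fun T : Module.End ℂ (HS N) => T (Q m₂)) hz
      simp only [Module.End.mul_apply, LinearMap.smul_apply] at h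
      rw [parityZ_parityZ] at h
      exact h
    rw [hQA, braket_smul_right, hM]
  have key : braket N g₁ (A g₂) =
      ((starRingEnd ℂ) u₁ * v₂ + ε * ((starRingEnd ℂ) v₁ * u₂)) * M := by
    rw [hg₁, hg₂, map_add, map_smul, map_smul, braket_add_left, braket_smul_left,
      braket_smul_left, braket_add_right, braket_add_right, braket_smul_right,
      braket_smul_right, braket_smul_right, braket_smul_right, x0, w0, y, hM]
    ring
  have hrhs : (A * Q) m₂ = A (Q m₂) := rfl
  rw [key, hrhs, ← hM, norm_mul]
  have hεabs : ‖ε‖ = 1 := by rcases hε with h | h <;> simp [h]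
  have hc : ‖(starRingEnd ℂ) u₁ * v₂ + ε * ((starRingEnd ℂ) v₁ * u₂)‖ ≤ 1 := by
    calc ‖(starRingEnd ℂ) u₁ * v₂ + ε * ((starRingEnd ℂ) v₁ * u₂)‖
        ≤ ‖(starRingEnd ℂ) u₁ * v₂‖ + ‖ε * ((starRingEnd ℂ) v₁ * u₂)‖ :=
          norm_add_le _ _
      _ = ‖u₁‖ * ‖v₂‖ + ‖v₁‖ * ‖u₂‖ := by
          simp [norm_mul, hεabs]
      _ ≤ 1 := by
          nlinarith [sq_nonneg (‖u₁‖ - ‖v₂‖),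
            sq_nonneg (‖v₁‖ - ‖u₂‖),
            norm_nonneg u₁, norm_nonneg v₁,
            norm_nonneg u₂, norm_nonneg v₂]
  calc ‖(starRingEnd ℂ) u₁ * v₂ + ε * ((starRingEnd ℂ) v₁ * u₂)‖ * ‖M‖
      ≤ 1 * ‖M‖ := by
        exact mul_le_mul_of_nonneg_right hc (norm_nonneg M)
    _ = ‖M‖ := one_mul _


end SpinChain
end

section
/- Let A = σ^{α_1}_1 σ^{α_2}_2 ⋯ σ^{α_L}_L with α_k ∈ {0,x,y,z} (σ^0 denoting the identity), where 1 ≤ L ≤ N−2, and suppose at least one α_k ∈ {y,z}. Then for all kink labels j, l ∈ {1,…,N} with L < j < N or L < l < N, the matrix elements vanish: ⟨j| A |l⟩ = 0 and ⟨j| A Π^z |l⟩ = 0. -/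
open Complex BigOperators Finset

namespace SpinChain

/- ===== Auxiliary machinery for statement_5 ===== -/

/-- Which single-site operators flip the spin at their site. -/
def flips : PKind → Bool
  | PKind.y => true
  | PKind.z => true
  | _ => false

/-- Action of a single-site operator on configurations. -/
def cfgOp (N : ℕ) (p : PKind × ZMod N) (s : Config N) : Config N :=
  if flips p.1 then flipAt N p.2 s else s

/-- Action of a product of single-site operators on configurations. -/
def cfgMap (N : ℕ) (ops : List (PKind × ZMod N)) (s : Config N) : Config N :=
  ops.foldr (cfgOp N) s

lemma flipAt_apply (N : ℕ) (i : ZMod N) (s : Config N) (k : ZMod N) :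
    flipAt N i s k = if k = i then !(s i) else s k :=
  Function.update_apply s i (!(s i)) k

lemma flipAt_invol (N : ℕ) (i : ZMod N) (s : Config N) : flipAt N i (flipAt N i s) = s := by
  funext k
  by_cases h : k = i <;> simp [flipAt_apply, h]

lemma sigmaZ_basis (N : ℕ) [NeZero N] (i : ZMod N) (s : Config N) :
    sigmaZ N i (basis N s) = basis N (flipAt N i s) := by
  funext t
  show basis N s (flipAt N i t) = basis N (flipAt N i s) t
  simp only [basis]
  by_cases h : t = flipAt N i s
  · subst h; simp [flipAt_invol]
  · rw [if_neg h, if_neg]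
    intro hc
    exact h (by rw [← hc, flipAt_invol])

lemma sigmaX_basis (N : ℕ) [NeZero N] (i : ZMod N) (s : Config N) :
    sigmaX N i (basis N s) = sgn (s i) • basis N s := by
  funext t
  show sgn (t i) * basis N s t = sgn (s i) * basis N s t
  by_cases h : t = s
  · subst h; rfl
  · simp [basis, h]

lemma pauli_basis (N : ℕ) [NeZero N] (κ : PKind) (i : ZMod N) (s : Config N) :
    ∃ c : ℂ, pauli N κ i (basis N s) = c • basis N (cfgOp N (κ, i) s) := by
  cases κ
  · exact ⟨1, by simp [pauli, cfgOp, flips]⟩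
  · exact ⟨sgn (s i), by simp [pauli, cfgOp, flips, sigmaX_basis]⟩
  · refine ⟨Complex.I * sgn (!(s i)), ?_⟩
    have h1 : (flipAt N i s) i = !(s i) := by simp [flipAt_apply]
    simp only [pauli, sigmaY, cfgOp, flips, if_pos, LinearMap.smul_apply,
      Module.End.mul_apply, sigmaZ_basis, sigmaX_basis, h1, smul_smul]
  · exact ⟨1, by simp [pauli, cfgOp, flips, sigmaZ_basis]⟩

lemma prod_basis (N : ℕ) [NeZero N] (ops : List (PKind × ZMod N)) (s : Config N) :
    ∃ c : ℂ, (ops.map (fun p => pauli N p.1 p.2)).prod (basis N s)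
      = c • basis N (cfgMap N ops s) := by
  induction ops generalizing s with
  | nil => exact ⟨1, by simp [cfgMap]⟩
  | cons p ops ih =>
    obtain ⟨c, hc⟩ := ih s
    obtain ⟨c', hc'⟩ := pauli_basis N p.1 p.2 (cfgMap N ops s)
    refine ⟨c * c', ?_⟩
    rw [List.map_cons, List.prod_cons, Module.End.mul_apply, hc, map_smul, hc']
    rw [smul_smul]
    rfl

lemma cfgMap_apply_of_notMem (N : ℕ) (ops : List (PKind × ZMod N)) (w : ZMod N)
    (h : ∀ p ∈ ops, p.2 ≠ w) (s : Config N) :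
    cfgMap N ops s w = s w := by
  induction ops with
  | nil => rfl
  | cons p ops ih =>
    have h2 : cfgMap N ops s w = s w := ih (fun q hq => h q (List.mem_cons_of_mem p hq))
    show cfgOp N p (cfgMap N ops s) w = s w
    unfold cfgOp
    split
    · rw [flipAt_apply, if_neg (fun hc => h p (List.mem_cons_self) hc.symm), h2]
    · exact h2

lemma cfgMap_apply_of_mem (N : ℕ) (ops : List (PKind × ZMod N)) (w : ZMod N)
    (hnd : (ops.map Prod.snd).Nodup)
    (h : ∃ p ∈ ops, p.2 = w ∧ flips p.1 = true) (s : Config N) :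
    cfgMap N ops s w = !(s w) := by
  induction ops with
  | nil => simp at h
  | cons q ops ih =>
    rw [List.map_cons, List.nodup_cons] at hnd
    obtain ⟨p, hp, hpw, hpf⟩ := h
    rcases List.mem_cons.mp hp with rfl | hp'
    · have hout : ∀ r ∈ ops, r.2 ≠ w := by
        intro r hr hrw
        exact hnd.1 (hpw ▸ hrw ▸ List.mem_map_of_mem (f := Prod.snd) hr)
      have h2 : cfgMap N ops s w = s w := cfgMap_apply_of_notMem N ops w hout s
      show cfgOp N p (cfgMap N ops s) w = !(s w)
      unfold cfgOp
      rw [if_pos hpf, flipAt_apply, if_pos hpw.symm, hpw, h2]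
    · have h2 : cfgMap N ops s w = !(s w) := ih hnd.2 ⟨p, hp', hpw, hpf⟩
      show cfgOp N q (cfgMap N ops s) w = !(s w)
      unfold cfgOp
      split
      · have hq : q.2 ≠ w := by
          intro hc
          exact hnd.1 (hc ▸ hpw ▸ hpw.symm ▸ (hpw ▸ List.mem_map_of_mem (f := Prod.snd) hp'))
        rw [flipAt_apply, if_neg (fun hc => hq hc.symm), h2]
      · exact h2

lemma braket_basis_smul (N : ℕ) [NeZero N] (t u : Config N) (c : ℂ) (h : u ≠ t) :
    braket N (basis N t) (c • basis N u) = 0 := by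
  unfold braket
  apply Finset.sum_eq_zero
  intro s _
  by_cases h1 : s = t
  · subst h1
    have : basis N u s = 0 := by simp [basis]; intro hc; exact absurd hc.symm h
    simp [Pi.smul_apply, this]
  · simp [basis, h1]

/- ===== combinatorics of kink configurations ===== -/

lemma kc_true_iff (N : ℕ) (j k : ZMod N) :
    kinkConfig N j k = true ↔ ((k - j).val = 0 ∨ (k - j).val % 2 = 1) := by
  simp only [kinkConfig, Bool.or_eq_true, beq_iff_eq]

lemma kc_self (N : ℕ) (j : ZMod N) : kinkConfig N j j = true := by
  simp [kinkConfig]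

lemma kc_succ (N : ℕ) [Fact (1 < N)] (j : ZMod N) : kinkConfig N j (j + 1) = true := by
  have h : j + 1 - j = 1 := by ring
  rw [kc_true_iff, h, ZMod.val_one]
  right; rfl

lemma kc_false (N : ℕ) (j k : ZMod N) (h0 : (k - j).val ≠ 0) (he : (k - j).val % 2 = 0) :
    kinkConfig N j k = false := by
  simp only [kinkConfig, Bool.or_eq_false_iff, beq_eq_false_iff_ne, ne_eq]
  exact ⟨h0, by omega⟩

lemma val_add_one (N : ℕ) [Fact (1 < N)] (x : ZMod N) : (x + 1).val = (x.val + 1) % N := by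
  haveI : NeZero N := ⟨by have := Fact.out (p := 1 < N); omega⟩
  rw [ZMod.val_add, ZMod.val_one]

lemma exists_wit_ne (N : ℕ) [Fact (1 < N)] (hN : Odd N)
    (j l : ZMod N) (hjl : j ≠ l) :
    ∃ w : ZMod N, (w = j ∨ w = j + 1) ∧ kinkConfig N j w ≠ kinkConfig N l w := by
  haveI : NeZero N := ⟨by have := Fact.out (p := 1 < N); omega⟩
  have hN1 : 1 < N := Fact.out
  set d := (j - l).val with hd
  have hdlt : d < N := ZMod.val_lt _
  have hd0 : d ≠ 0 := by
    intro h
    exact hjl (sub_eq_zero.mp ((ZMod.val_eq_zero _).mp h))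
  by_cases hpar : d % 2 = 0
  · refine ⟨j, Or.inl rfl, ?_⟩
    rw [kc_self, kc_false N l j hd0 hpar]
    simp
  · obtain ⟨t, ht⟩ := hN
    have hdN : d ≠ N - 1 := by omega
    have hval : (j + 1 - l).val = d + 1 := by
      have h1 : j + 1 - l = (j - l) + 1 := by ring
      rw [h1, val_add_one, ← hd, Nat.mod_eq_of_lt (by omega)]
    refine ⟨j + 1, Or.inr rfl, ?_⟩
    rw [kc_succ, kc_false N l (j + 1) (by omega) (by omega)]
    simp

lemma exists_wit_true (N : ℕ) [Fact (1 < N)] (j l : ZMod N) :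
    ∃ w : ZMod N, (w = j ∨ w = j + 1) ∧ kinkConfig N j w = true ∧ kinkConfig N l w = true := by
  haveI : NeZero N := ⟨by have := Fact.out (p := 1 < N); omega⟩
  have hN1 : 1 < N := Fact.out
  set d := (j - l).val with hd
  have hdlt : d < N := ZMod.val_lt _
  by_cases hd0 : d = 0
  · refine ⟨j, Or.inl rfl, kc_self N j, ?_⟩
    rw [kc_true_iff]
    left; exact hd0
  · by_cases hpar : d % 2 = 1
    · refine ⟨j, Or.inl rfl, kc_self N j, ?_⟩
      rw [kc_true_iff]
      right; exact hpar
    · by_cases hdN : d = N - 1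
      · refine ⟨j + 1, Or.inr rfl, kc_succ N j, ?_⟩
        rw [kc_true_iff]
        left
        have h1 : j + 1 - l = (j - l) + 1 := by ring
        rw [h1, val_add_one, ← hd, hdN]
        have hNN : N - 1 + 1 = N := by omega
        rw [hNN, Nat.mod_self]
      · refine ⟨j + 1, Or.inr rfl, kc_succ N j, ?_⟩
        rw [kc_true_iff]
        right
        have h1 : j + 1 - l = (j - l) + 1 := by ring
        have h2 : (d + 1) % N = d + 1 := Nat.mod_eq_of_lt (by omega)
        rw [h1, val_add_one, ← hd, h2]
        omega

/- ===== site arithmetic ===== -/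

lemma natSite_ne (N L m w : ℕ) (hm : m < L) (hLw : L < w) (hwN : w ≤ N) :
    ((m + 1 : ℕ) : ZMod N) ≠ ((w : ℕ) : ZMod N) := by
  haveI : NeZero N := ⟨by omega⟩
  intro hc
  have h1 : ((m + 1 : ℕ) : ZMod N).val = m + 1 := ZMod.val_cast_of_lt (by omega)
  rcases lt_or_eq_of_le hwN with hlt | heq
  · have h2 : ((w : ℕ) : ZMod N).val = w := ZMod.val_cast_of_lt hlt
    rw [hc, h2] at h1
    omega
  · subst heq
    rw [hc, ZMod.natCast_self] at h1
    simp [ZMod.val_zero] at h1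

lemma cast_succ_inj (N m m' : ℕ) (hm : m < N) (hm' : m' < N)
    (h : ((m + 1 : ℕ) : ZMod N) = ((m' + 1 : ℕ) : ZMod N)) : m = m' := by
  haveI : NeZero N := ⟨by omega⟩
  have h1 := congrArg ZMod.val h
  rw [ZMod.val_natCast, ZMod.val_natCast] at h1
  rcases Nat.lt_or_ge (m + 1) N with hlt | hge
  · rcases Nat.lt_or_ge (m' + 1) N with hlt' | hge'
    · rw [Nat.mod_eq_of_lt hlt, Nat.mod_eq_of_lt hlt'] at h1
      omega
    · have : m' + 1 = N := by omega
      rw [Nat.mod_eq_of_lt hlt, this, Nat.mod_self] at h1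
      omega
  · have hmN : m + 1 = N := by omega
    rcases Nat.lt_or_ge (m' + 1) N with hlt' | hge'
    · rw [hmN, Nat.mod_self, Nat.mod_eq_of_lt hlt'] at h1
      omega
    · omega

lemma parity_z_basis (N : ℕ) [NeZero N] (hN1 : 1 < N) (s : Config N) :
    ∃ c : ℂ, parity N PKind.z (basis N s) = c • basis N (fun k => !(s k)) := by
  set zops : List (PKind × ZMod N) :=
    (List.range N).map (fun m => (PKind.z, ((m + 1 : ℕ) : ZMod N))) with hzops
  have hprod : parity N PKind.z = (zops.map (fun p => pauli N p.1 p.2)).prod := by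
    rw [parity, hzops, List.map_map]
    rfl
  obtain ⟨c, hc⟩ := prod_basis N zops s
  have hcfg : cfgMap N zops s = fun k => !(s k) := by
    funext k
    apply cfgMap_apply_of_mem
    · rw [hzops, List.map_map]
      refine List.Nodup.map_on ?_ (List.nodup_range)
      intro x hx y hy hxy
      simp only [Function.comp_apply] at hxy
      exact cast_succ_inj N x y (List.mem_range.mp hx) (List.mem_range.mp hy) hxy
    · refine ⟨(PKind.z, ((((k - 1).val) + 1 : ℕ) : ZMod N)), ?_, ?_, rfl⟩
      · rw [hzops]
        exact List.mem_map_of_mem (List.mem_range.mpr (ZMod.val_lt (k - 1)))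
      · push_cast
        rw [ZMod.natCast_rightInverse (k - 1)]
        ring
  rw [hprod, hc, hcfg]
  exact ⟨c, rfl⟩


/-- For `A = σ^{α₁}_1 ⋯ σ^{α_L}_L` with at least one `α_k ∈ {y,z}` and
`1 ≤ L ≤ N−2`, if `L < j < N` or `L < l < N` then `⟨j|A|l⟩ = 0` and `⟨j|AΠ^z|l⟩ = 0`. -/
theorem statement_5 (N : ℕ) [NeZero N] (hN : Odd N)
    (L : ℕ) (hL1 : 1 ≤ L) (hLN : L + 2 ≤ N)
    (α : Fin L → PKind) (hα : ∃ k, α k = PKind.y ∨ α k = PKind.z)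
    (A : Module.End ℂ (HS N))
    (hA : A = ((List.finRange L).map
      (fun k => pauli N (α k) (((k : ℕ) + 1 : ℕ) : ZMod N))).prod)
    (j l : ℕ) (hj1 : 1 ≤ j) (hjN : j ≤ N) (hl1 : 1 ≤ l) (hlN : l ≤ N)
    (h : (L < j ∧ j < N) ∨ (L < l ∧ l < N)) :
    braket N (kink N (j : ZMod N)) (A (kink N (l : ZMod N))) = 0 ∧
    braket N (kink N (j : ZMod N)) ((A * parity N PKind.z) (kink N (l : ZMod N))) = 0 := by
  haveI : Fact (1 < N) := ⟨by omega⟩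
  have hN1 : 1 < N := Fact.out
  classical
  set aops : List (PKind × ZMod N) :=
    (List.finRange L).map (fun k => (α k, (((k : ℕ) + 1 : ℕ) : ZMod N))) with haops
  have hAprod : A = (aops.map (fun p => pauli N p.1 p.2)).prod := by
    rw [hA, haops, List.map_map]
    rfl
  have hsites : ∀ p ∈ aops, ∃ m : ℕ, m < L ∧ p.2 = ((m + 1 : ℕ) : ZMod N) := by
    intro p hp
    rw [haops] at hp
    obtain ⟨k, _, rfl⟩ := List.mem_map.mp hp
    exact ⟨(k : ℕ), k.isLt, rfl⟩
  have hnd : (aops.map Prod.snd).Nodup := by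
    rw [haops, List.map_map]
    refine List.Nodup.map_on ?_ (List.nodup_finRange L)
    intro x _ y _ hxy
    simp only [Function.comp_apply] at hxy
    have hx' : (x : ℕ) < N := by have := x.isLt; omega
    have hy' : (y : ℕ) < N := by have := y.isLt; omega
    exact Fin.ext (cast_succ_inj N _ _ hx' hy' hxy)
  have hout : ∀ w : ℕ, L < w → w ≤ N → ∀ p ∈ aops, p.2 ≠ ((w : ℕ) : ZMod N) := by
    intro w hw1 hw2 p hp
    obtain ⟨m, hm, hpe⟩ := hsites p hp
    rw [hpe]
    exact natSite_ne N L m w hm hw1 hw2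
  have hAb : ∀ s : Config N, ∃ c : ℂ, A (basis N s) = c • basis N (cfgMap N aops s) := by
    intro s
    rw [hAprod]
    exact prod_basis N aops s
  -- witness-outside helper
  have houtw : ∀ (w : ZMod N) (v : ℕ), L < v → v < N →
      (w = ((v : ℕ) : ZMod N) ∨ w = ((v : ℕ) : ZMod N) + 1) → ∀ p ∈ aops, p.2 ≠ w := by
    intro w v hv1 hv2 hw p hp
    rcases hw with rfl | rfl
    · exact hout v hv1 (le_of_lt hv2) p hp
    · have h1 := hout (v + 1) (by omega) (by omega) p hp
      intro hc
      apply h1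
      rw [hc]
      push_cast
      ring
  constructor
  · -- ⟨j|A|l⟩ = 0
    obtain ⟨c, hc⟩ := hAb (kinkConfig N (l : ZMod N))
    show braket N (basis N (kinkConfig N (j : ZMod N))) (A (basis N (kinkConfig N (l : ZMod N)))) = 0
    rw [hc]
    apply braket_basis_smul
    intro heq
    by_cases hjl : ((j : ℕ) : ZMod N) = ((l : ℕ) : ZMod N)
    · obtain ⟨k, hk⟩ := hα
      have hkmem : ∃ p ∈ aops, p.2 = (((k : ℕ) + 1 : ℕ) : ZMod N) ∧ flips p.1 = true := by
        refine ⟨(α k, (((k : ℕ) + 1 : ℕ) : ZMod N)), ?_, rfl, ?_⟩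
        · rw [haops]
          exact List.mem_map_of_mem (List.mem_finRange k)
        · rcases hk with hk | hk <;> simp [hk, flips]
      have h1 := cfgMap_apply_of_mem N aops _ hnd hkmem (kinkConfig N (l : ZMod N))
      have h2 := congrFun heq ((((k : ℕ) + 1 : ℕ)) : ZMod N)
      rw [h1, hjl] at h2
      simp at h2
    · rcases h with ⟨hLj, hjN'⟩ | ⟨hLl, hlN'⟩
      · obtain ⟨w, hw, hne⟩ := exists_wit_ne N hN ((j : ℕ) : ZMod N) ((l : ℕ) : ZMod N) hjl
        have h2 := congrFun heq w
        rw [cfgMap_apply_of_notMem N aops w (houtw w j hLj hjN' hw)] at h2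
        exact hne h2.symm
      · obtain ⟨w, hw, hne⟩ := exists_wit_ne N hN ((l : ℕ) : ZMod N) ((j : ℕ) : ZMod N) (Ne.symm hjl)
        have h2 := congrFun heq w
        rw [cfgMap_apply_of_notMem N aops w (houtw w l hLl hlN' hw)] at h2
        exact hne h2
  · -- ⟨j|A Πᶻ|l⟩ = 0
    obtain ⟨c1, hc1⟩ := parity_z_basis N hN1 (kinkConfig N (l : ZMod N))
    obtain ⟨c2, hc2⟩ := hAb (fun k => !(kinkConfig N (l : ZMod N) k))
    show braket N (basis N (kinkConfig N (j : ZMod N)))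
      ((A * parity N PKind.z) (basis N (kinkConfig N (l : ZMod N)))) = 0
    rw [Module.End.mul_apply, hc1, map_smul, hc2, smul_smul]
    apply braket_basis_smul
    intro heq
    rcases h with ⟨hLj, hjN'⟩ | ⟨hLl, hlN'⟩
    · obtain ⟨w, hw, ht1, ht2⟩ := exists_wit_true N ((j : ℕ) : ZMod N) ((l : ℕ) : ZMod N)
      have h2 := congrFun heq w
      rw [cfgMap_apply_of_notMem N aops w (houtw w j hLj hjN' hw)] at h2
      rw [ht1, ht2] at h2
      simp at h2
    · obtain ⟨w, hw, ht1, ht2⟩ := exists_wit_true N ((l : ℕ) : ZMod N) ((j : ℕ) : ZMod N)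
      have h2 := congrFun heq w
      rw [cfgMap_apply_of_notMem N aops w (houtw w l hLl hlN' hw)] at h2
      rw [ht1, ht2] at h2
      simp at h2

end SpinChain
end

section
/- Let A = ∏_{k∈S} σ^x_k for a subset S ⊆ {1,…,L} of odd cardinality, where 1 ≤ L ≤ N, and set c = ∏_{k∈S}(−1)^k ∈ {−1,+1}. Then ⟨s_{p_1}| A |s_{p_2}⟩ = −c·e^{−i(p_1−p_2)/2}/(N·cos((p_1−p_2)/2)) + ξ_N, where the correction satisfies |ξ_N| ≤ 2(L−1)/N. -/
open Complex BigOperators Finset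

namespace SpinChain

lemma flatMap_singleton_map {α β : Type*} (l : List α) (f : α → β) :
    (l.flatMap fun a => [f a]) = l.map f := by
  induction l with
  | nil => rfl
  | cons a t ih => simp [List.flatMap_cons, ih]

-- L1: diagonal action of a product of sigmaX
lemma prodX_apply (N : ℕ) (l : List (ZMod N)) (f : HS N) (s : Config N) :
    ((l.map (sigmaX N)).prod) f s
      = (l.map (fun j => sgn (s j))).prod * f s := by
  induction l with
  | nil => simp
  | cons a t ih =>
      rw [List.map_cons, List.map_cons, List.prod_cons, List.prod_cons, Module.End.mul_apply]
      have h1 : (sigmaX N a) (((t.map (sigmaX N)).prod) f) s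
          = sgn (s a) * (((t.map (sigmaX N)).prod) f) s := rfl
      rw [h1, ih]; ring

lemma sort_prod (S : Finset ℕ) (g : ℕ → ℂ) :
    ((S.sort (· ≤ ·)).map g).prod = ∏ k ∈ S, g k := by
  rw [← Multiset.prod_coe, ← Multiset.map_coe, Finset.sort_eq]
  rfl

-- injectivity of kinkConfig
lemma kinkConfig_inj (N : ℕ) [NeZero N] (hN : Odd N) (a b : ZMod N)
    (h : kinkConfig N a = kinkConfig N b) : a = b := by
  rcases Nat.lt_or_ge N 2 with h2 | h2
  · haveI : Subsingleton (ZMod N) := by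
      interval_cases N
      · exact (NeZero.ne 0 rfl).elim
      · infer_instance
    exact Subsingleton.elim a b
  · have hb : kinkConfig N a b = true := by
      rw [h]; simp [kinkConfig]
    have hb1 : kinkConfig N a (b + 1) = true := by
      rw [h]
      have : (b + 1 - b) = (1 : ZMod N) := by ring
      simp only [kinkConfig, this]
      have : (1 : ZMod N).val = 1 := ZMod.val_one_eq_one_mod N ▸ Nat.mod_eq_of_lt h2
      simp [this]
    set r := (b - a).val with hr
    have hrlt : r < N := ZMod.val_lt _
    simp only [kinkConfig, Bool.or_eq_true, beq_iff_eq] at hb hb1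
    rcases hb with h0 | hodd
    · have : b - a = 0 := by
        have := ZMod.val_eq_zero (b - a) |>.mp h0  -- maybe name differs
        exact this
      have : b = a := by linear_combination this  -- sub_eq_zero
      exact this.symm
    · exfalso
      have hrne : r ≠ N - 1 := by
        intro hrN
        obtain ⟨t, ht⟩ := hN
        omega
      have hval : (b + 1 - a).val = r + 1 := by
        have : b + 1 - a = (b - a) + 1 := by ring
        rw [this, ZMod.val_add]
        have h1 : (1 : ZMod N).val = 1 := ZMod.val_one_eq_one_mod N ▸ Nat.mod_eq_of_lt h2
        rw [h1]
        exact Nat.mod_eq_of_lt (by omega)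
      rw [hval] at hb1
      omega



lemma momState_apply (N : ℕ) [NeZero N] (p : ℝ) (s : Config N) :
    momState N p s = (Real.sqrt N : ℂ)⁻¹ * ∑ j ∈ Finset.range N,
      Complex.exp (Complex.I * p * ((j : ℂ) + 1)) *
        (if s = kinkConfig N ((j + 1 : ℕ) : ZMod N) then 1 else 0) := by
  simp [momState, kink, basis, Finset.sum_apply, Pi.smul_apply, smul_eq_mul]

lemma braket_key (N : ℕ) [NeZero N]
    (hinj : ∀ a b : ZMod N, kinkConfig N a = kinkConfig N b → a = b)
    (p₁ p₂ : ℝ) (D : Config N → ℂ) :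
    (∑ s : Config N, (starRingEnd ℂ) (momState N p₁ s) * (D s * momState N p₂ s))
      = (N : ℂ)⁻¹ * ∑ j ∈ Finset.range N,
          (starRingEnd ℂ) (Complex.exp (Complex.I * p₁ * ((j : ℂ) + 1))) *
            Complex.exp (Complex.I * p₂ * ((j : ℂ) + 1)) *
            D (kinkConfig N ((j + 1 : ℕ) : ZMod N)) := by
  classical
  set c : ℕ → Config N := fun j => kinkConfig N ((j + 1 : ℕ) : ZMod N) with hc
  set a : ℕ → ℂ := fun j => (starRingEnd ℂ) (Complex.exp (Complex.I * p₁ * ((j : ℂ) + 1))) with ha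
  set b : ℕ → ℂ := fun j => Complex.exp (Complex.I * p₂ * ((j : ℂ) + 1)) with hb
  set r : ℂ := (Real.sqrt N : ℂ)⁻¹ with hr
  have hconj : ∀ s, (starRingEnd ℂ) (momState N p₁ s)
      = r * ∑ j ∈ Finset.range N, a j * (if s = c j then 1 else 0) := by
    intro s
    rw [momState_apply, map_mul, map_sum]
    have h1 : (starRingEnd ℂ) r = r := by
      rw [hr, map_inv₀, Complex.conj_ofReal]
    rw [h1]
    congr 1
    refine Finset.sum_congr rfl fun j _ => ?_
    rw [map_mul, apply_ite (starRingEnd ℂ), map_one, map_zero]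
  have hstep : ∀ s, (starRingEnd ℂ) (momState N p₁ s) * (D s * momState N p₂ s)
      = ∑ j' ∈ Finset.range N, ∑ j ∈ Finset.range N,
          (r * r * (a j' * b j * D s)) *
            ((if s = c j' then (1:ℂ) else 0) * (if s = c j then 1 else 0)) := by
    intro s
    rw [hconj s, momState_apply]
    rw [show r * (∑ j' ∈ Finset.range N, a j' * (if s = c j' then (1:ℂ) else 0)) *
        (D s * (r * ∑ j ∈ Finset.range N, b j * (if s = c j then (1:ℂ) else 0)))
      = (∑ j' ∈ Finset.range N, a j' * (if s = c j' then (1:ℂ) else 0)) *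
        (∑ j ∈ Finset.range N, b j * (if s = c j then (1:ℂ) else 0)) * (r * r * D s) from by ring]
    rw [Finset.sum_mul_sum]
    rw [Finset.sum_mul]
    refine Finset.sum_congr rfl fun j' _ => ?_
    rw [Finset.sum_mul]
    refine Finset.sum_congr rfl fun j _ => ?_
    ring
  rw [Finset.sum_congr rfl fun s _ => hstep s]
  rw [Finset.sum_comm]
  rw [Finset.sum_congr rfl fun (j' : ℕ) (_ : j' ∈ Finset.range N) =>
    (Finset.sum_comm : (∑ s : Config N, ∑ j ∈ Finset.range N,
      (r * r * (a j' * b j * D s)) *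
        ((if s = c j' then (1:ℂ) else 0) * (if s = c j then 1 else 0)))
      = ∑ j ∈ Finset.range N, ∑ s : Config N, _)]
  have hcollapse : ∀ j' ∈ Finset.range N, ∀ j ∈ Finset.range N,
      (∑ s : Config N, (r * r * (a j' * b j * D s)) *
        ((if s = c j' then (1:ℂ) else 0) * (if s = c j then 1 else 0)))
      = if j = j' then r * r * (a j' * b j * D (c j)) else 0 := by
    intro j' hj' j hj
    have hsum : (∑ s : Config N, (r * r * (a j' * b j * D s)) *
        ((if s = c j' then (1:ℂ) else 0) * (if s = c j then 1 else 0)))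
        = (r * r * (a j' * b j * D (c j))) *
          ((if c j = c j' then (1:ℂ) else 0) * (if c j = c j then 1 else 0)) :=
      Finset.sum_eq_single (c j) (fun s _ hs => by rw [if_neg hs]; ring)
        (fun h => absurd (Finset.mem_univ _) h)
    rw [hsum, if_pos rfl]
    by_cases hcc : c j = c j'
    · have hjj : j = j' := by
        have h1 := hinj _ _ hcc
        have hj1 : j < N := Finset.mem_range.mp hj
        have hj'1 : j' < N := Finset.mem_range.mp hj'
        have h2 : ((j : ℕ) : ZMod N) = ((j' : ℕ) : ZMod N) := by
          push_cast at h1 ⊢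
          linear_combination h1
        have h3 := congrArg ZMod.val h2
        rwa [ZMod.val_cast_of_lt hj1, ZMod.val_cast_of_lt hj'1] at h3
      rw [if_pos hcc, if_pos hjj]; ring
    · have hjj : j ≠ j' := fun h => hcc (h ▸ rfl)
      rw [if_neg hcc, if_neg hjj]; ring
  rw [Finset.sum_congr rfl fun j' hj' => Finset.sum_congr rfl fun j hj =>
    hcollapse j' hj' j hj]
  have hdiag : ∀ j' ∈ Finset.range N,
      (∑ j ∈ Finset.range N, if j = j' then r * r * (a j' * b j * D (c j)) else 0)
      = r * r * (a j' * b j' * D (c j')) := by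
    intro j' hj'
    rw [Finset.sum_ite_eq' (Finset.range N) j'
      (fun j => r * r * (a j' * b j * D (c j))), if_pos hj']
  rw [Finset.sum_congr rfl hdiag]
  have hrr : r * r = (N : ℂ)⁻¹ := by
    rw [hr, ← mul_inv, ← Complex.ofReal_mul,
      Real.mul_self_sqrt (Nat.cast_nonneg N)]
    norm_num
  rw [← Finset.mul_sum, hrr]



lemma sgn_kink (N : ℕ) [NeZero N] (hN : Odd N) (k m : ℕ) (hk1 : 1 ≤ k) (hkN : k ≤ N)
    (hm1 : 1 ≤ m) (hmN : m ≤ N) :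
    sgn (kinkConfig N ((m : ℕ) : ZMod N) ((k : ℕ) : ZMod N))
      = (-1 : ℂ)^(m+k) * (if k ≤ m then 1 else -1) := by
  have hNodd : N % 2 = 1 := Nat.odd_iff.mp hN
  have hN1 : 1 ≤ N := by omega
  by_cases hkm : k ≤ m
  · have hcast : (((k + N - m : ℕ)) : ZMod N) = (k : ZMod N) - m := by
      push_cast [Nat.cast_sub (show m ≤ k + N by omega)]
      rw [ZMod.natCast_self]; ring
    rcases eq_or_lt_of_le hkm with heq | hlt
    · subst heq
      have h0 : ((k : ZMod N) - (k : ZMod N)) = 0 := sub_self _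
      have : ((k : ZMod N) - (k : ZMod N)).val = 0 := by rw [h0, ZMod.val_zero]
      simp only [kinkConfig, this]
      have : Even (k + k) := ⟨k, rfl⟩
      simp [sgn, this.neg_one_pow]
    · have hvlt : k + N - m < N := by omega
      have hv : ((k : ZMod N) - m).val = k + N - m := by
        rw [← hcast, ZMod.val_cast_of_lt hvlt]
      simp only [kinkConfig, hv]
      have hne : k + N - m ≠ 0 := by omega
      rcases Nat.even_or_odd (m + k) with he | ho
      · have h1 : (k + N - m) % 2 = 1 := by
          rcases he with ⟨t, ht⟩; omega
        have : Even (m + k) := he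
        simp [sgn, hne, h1, this.neg_one_pow, hkm]
      · have h1 : (k + N - m) % 2 = 0 := by
          rcases ho with ⟨t, ht⟩; omega
        simp [sgn, hne, h1, ho.neg_one_pow, hkm]
  · have hmk : m < k := by omega
    have hcast : (((k - m : ℕ)) : ZMod N) = (k : ZMod N) - m := by
      push_cast [Nat.cast_sub (show m ≤ k by omega)]; ring
    have hvlt : k - m < N := by omega
    have hv : ((k : ZMod N) - m).val = k - m := by
      rw [← hcast, ZMod.val_cast_of_lt hvlt]
    simp only [kinkConfig, hv]
    have hne : k - m ≠ 0 := by omega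
    rcases Nat.even_or_odd (m + k) with he | ho
    · have h1 : (k - m) % 2 = 0 := by rcases he with ⟨t, ht⟩; omega
      simp [sgn, hne, h1, he.neg_one_pow, hkm]
    · have h1 : (k - m) % 2 = 1 := by rcases ho with ⟨t, ht⟩; omega
      simp [sgn, hne, h1, ho.neg_one_pow, hkm]

lemma D_eq (N : ℕ) [NeZero N] (hN : Odd N) (L : ℕ) (hLN : L ≤ N)
    (S : Finset ℕ) (hS : S ⊆ Finset.Icc 1 L) (hScard : Odd S.card)
    (m : ℕ) (hm1 : 1 ≤ m) (hmN : m ≤ N) :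
    ∏ k ∈ S, sgn (kinkConfig N ((m : ℕ) : ZMod N) ((k : ℕ) : ZMod N))
      = (-1 : ℂ)^m * (∏ k ∈ S, (-1 : ℂ)^k) * ∏ k ∈ S, (if k ≤ m then (1:ℂ) else -1) := by
  have h1 : ∏ k ∈ S, sgn (kinkConfig N ((m : ℕ) : ZMod N) ((k : ℕ) : ZMod N))
      = ∏ k ∈ S, ((-1:ℂ)^m * ((-1:ℂ)^k * (if k ≤ m then (1:ℂ) else -1))) := by
    refine Finset.prod_congr rfl fun k hk => ?_
    have hk' := Finset.mem_Icc.mp (hS hk)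
    rw [sgn_kink N hN k m hk'.1 (le_trans hk'.2 hLN) hm1 hmN, pow_add]; ring
  rw [h1, Finset.prod_mul_distrib, Finset.prod_mul_distrib, Finset.prod_const]
  have : (((-1:ℂ)^m)^S.card) = (-1:ℂ)^m := by
    rcases Nat.even_or_odd m with he | ho
    · rw [he.neg_one_pow, one_pow]
    · rw [ho.neg_one_pow, hScard.neg_one_pow]
  rw [this, mul_assoc]


lemma cos_ne_zero' (N k₁ k₂ : ℕ) [NeZero N] (hN : Odd N) (p₁ p₂ : ℝ)
    (hp₁ : p₁ = 2 * Real.pi * k₁ / N) (hp₂ : p₂ = 2 * Real.pi * k₂ / N) :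
    Real.cos ((p₁ - p₂) / 2) ≠ 0 := by
  intro h
  obtain ⟨n, hn⟩ := Real.cos_eq_zero_iff.mp h
  rw [hp₁, hp₂] at hn
  have hNne : (N : ℝ) ≠ 0 := Nat.cast_ne_zero.mpr (NeZero.ne N)
  have hπ : Real.pi ≠ 0 := Real.pi_ne_zero
  have key : 2 * ((k₁ : ℝ) - k₂) * Real.pi = (N : ℝ) * ((2 * n + 1) * Real.pi) := by
    field_simp at hn
    linear_combination Real.pi * hn
  have key2 : 2 * ((k₁ : ℝ) - k₂) = (N : ℝ) * (2 * n + 1) := by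
    have := mul_right_cancel₀ hπ (by linarith [key] : (2 * ((k₁:ℝ) - k₂)) * Real.pi = ((N:ℝ) * (2*n+1)) * Real.pi)
    exact this
  have kz : 2 * ((k₁ : ℤ) - k₂) = (N : ℤ) * (2 * n + 1) := by exact_mod_cast key2
  have hodd : Odd ((N : ℤ) * (2 * n + 1)) :=
    (Int.odd_coe_nat N |>.mpr hN).mul ⟨n, by ring⟩
  obtain ⟨m, hm⟩ := hodd
  omega

lemma exp_pow_N (N k₁ k₂ : ℕ) [NeZero N] (p₁ p₂ : ℝ)
    (hp₁ : p₁ = 2 * Real.pi * k₁ / N) (hp₂ : p₂ = 2 * Real.pi * k₂ / N) :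
    Complex.exp (Complex.I * ((p₂ : ℂ) - (p₁ : ℂ))) ^ N = 1 := by
  rw [← Complex.exp_nat_mul]
  have hNne : (N : ℝ) ≠ 0 := Nat.cast_ne_zero.mpr (NeZero.ne N)
  have harg : (N : ℂ) * (Complex.I * ((p₂ : ℂ) - (p₁ : ℂ)))
      = ((k₂ - k₁ : ℤ) : ℂ) * (2 * (Real.pi : ℂ) * Complex.I) := by
    rw [hp₁, hp₂]
    have hNC : (N : ℂ) ≠ 0 := Nat.cast_ne_zero.mpr (NeZero.ne N)
    push_cast
    field_simp
  rw [harg, Complex.exp_int_mul_two_pi_mul_I]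

lemma main_term (N : ℕ) [NeZero N] (hN : Odd N) (k₁ k₂ : ℕ) (p₁ p₂ : ℝ)
    (hp₁ : p₁ = 2 * Real.pi * k₁ / N) (hp₂ : p₂ = 2 * Real.pi * k₂ / N)
    (hcos : Real.cos ((p₁ - p₂) / 2) ≠ 0) (c : ℂ) :
    (N : ℂ)⁻¹ * ∑ j ∈ Finset.range N,
        (starRingEnd ℂ) (Complex.exp (Complex.I * p₁ * ((j : ℂ) + 1))) *
          Complex.exp (Complex.I * p₂ * ((j : ℂ) + 1)) * (c * (-1 : ℂ) ^ (j + 1))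
      = -(c * Complex.exp (-(Complex.I * ((p₁ : ℂ) - (p₂ : ℂ)) / 2))) /
          ((N : ℂ) * ((Real.cos ((p₁ - p₂) / 2) : ℝ) : ℂ)) := by
  set v : ℂ := Complex.exp (-(Complex.I * ((p₁ : ℂ) - (p₂ : ℂ)) / 2)) with hv
  set q : ℂ := -Complex.exp (Complex.I * ((p₂ : ℂ) - (p₁ : ℂ))) with hqdef
  set cosC : ℂ := ((Real.cos ((p₁ - p₂) / 2) : ℝ) : ℂ) with hcosC
  have hNC : (N : ℂ) ≠ 0 := Nat.cast_ne_zero.mpr (NeZero.ne N)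
  have hFq : ∀ j : ℕ,
      (starRingEnd ℂ) (Complex.exp (Complex.I * p₁ * ((j : ℂ) + 1))) *
        Complex.exp (Complex.I * p₂ * ((j : ℂ) + 1)) * (c * (-1 : ℂ) ^ (j + 1))
      = c * q ^ (j + 1) := by
    intro j
    have h1 : (starRingEnd ℂ) (Complex.exp (Complex.I * p₁ * ((j : ℂ) + 1)))
        = Complex.exp (-(Complex.I * p₁ * ((j : ℂ) + 1))) := by
      rw [← Complex.exp_conj]
      congr 1
      simp only [map_neg, map_mul, map_add, Complex.conj_I, Complex.conj_ofReal, map_one,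
        Complex.conj_natCast]
      ring
    rw [h1, ← Complex.exp_add]
    have h2 : -(Complex.I * p₁ * ((j : ℂ) + 1)) + Complex.I * p₂ * ((j : ℂ) + 1)
        = ((j + 1 : ℕ) : ℂ) * (Complex.I * ((p₂ : ℂ) - (p₁ : ℂ))) := by push_cast; ring
    rw [h2, Complex.exp_nat_mul, hqdef, neg_pow]
    ring
  have hv2 : v * v = Complex.exp (Complex.I * ((p₂ : ℂ) - (p₁ : ℂ))) := by
    rw [hv, ← Complex.exp_add]; congr 1; ring
  have hq : q = -(v * v) := by rw [hqdef, hv2]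
  have hqN : q ^ N = -1 := by
    rw [hqdef, neg_pow, hN.neg_one_pow,
      exp_pow_N N k₁ k₂ p₁ p₂ hp₁ hp₂, mul_one]
  have hvexp : v = Complex.exp (-((((p₁ - p₂) / 2 : ℝ) : ℂ)) * Complex.I) := by
    rw [hv]; congr 1; push_cast; ring
  have hvinv : v * Complex.exp ((((p₁ - p₂) / 2 : ℝ) : ℂ) * Complex.I) = 1 := by
    rw [hvexp, ← Complex.exp_add]
    rw [show -((((p₁ - p₂) / 2 : ℝ) : ℂ)) * Complex.I
        + (((p₁ - p₂) / 2 : ℝ) : ℂ) * Complex.I = 0 by ring, Complex.exp_zero]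
  have hθ : cosC = (Complex.exp ((((p₁ - p₂) / 2 : ℝ) : ℂ) * Complex.I)
      + Complex.exp (-((((p₁ - p₂) / 2 : ℝ) : ℂ)) * Complex.I)) / 2 := by
    rw [hcosC, Complex.ofReal_cos, Complex.cos]
  have hq1' : q - 1 = -2 * v * cosC := by
    rw [hθ, hq, ← hvexp]
    linear_combination hvinv
  have hcos0 : cosC ≠ 0 := Complex.ofReal_ne_zero.mpr hcos
  have hvne : v ≠ 0 := Complex.exp_ne_zero _
  have hq1 : q ≠ 1 := by
    intro h
    have h0 : q - 1 = 0 := by rw [h]; ring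
    rw [hq1'] at h0
    rcases mul_eq_zero.mp h0 with h' | h'
    · rcases mul_eq_zero.mp h' with h'' | h''
      · norm_num at h''
      · exact hvne h''
    · exact hcos0 h'
  rw [Finset.sum_congr rfl fun j _ => hFq j, ← Finset.mul_sum]
  have hsum : ∑ j ∈ Finset.range N, q ^ (j + 1) = q * ((q ^ N - 1) / (q - 1)) := by
    rw [show (∑ j ∈ Finset.range N, q ^ (j + 1)) = ∑ j ∈ Finset.range N, q * q ^ j from
      Finset.sum_congr rfl fun j _ => by rw [pow_succ]; ring, ← Finset.mul_sum,
      geom_sum_eq hq1]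
  rw [hsum, hqN, hq1', hq]
  field_simp
  ring

/-- For `A = ∏_{k∈S} σ^x_k`, `S ⊆ {1,…,L}` of odd cardinality and
`c = ∏_{k∈S}(−1)^k`, one has
`⟨s_{p₁}|A|s_{p₂}⟩ = −c e^{−i(p₁−p₂)/2}/(N cos((p₁−p₂)/2)) + ξ_N` with `|ξ_N| ≤ 2(L−1)/N`. -/
theorem statement_7 (N : ℕ) [NeZero N] (hN : Odd N)
    (L : ℕ) (hL1 : 1 ≤ L) (hLN : L ≤ N)
    (S : Finset ℕ) (hS : S ⊆ Finset.Icc 1 L) (hScard : Odd S.card)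
    (A : Module.End ℂ (HS N))
    (hA : A = ((S.sort (· ≤ ·)).map (fun k => sigmaX N (k : ZMod N))).prod)
    (c : ℂ) (hc : c = ∏ k ∈ S, (-1 : ℂ) ^ k)
    (k₁ k₂ : ℕ) (hk₁ : k₁ < N) (hk₂ : k₂ < N)
    (p₁ p₂ : ℝ) (hp₁ : p₁ = 2 * Real.pi * k₁ / N) (hp₂ : p₂ = 2 * Real.pi * k₂ / N) :
    ∃ ξ : ℂ,
      braket N (momState N p₁) (A (momState N p₂)) =
        -(c * Complex.exp (-(Complex.I * (p₁ - p₂) / 2))) /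
          (N * (Real.cos ((p₁ - p₂) / 2) : ℂ)) + ξ ∧
      ‖ξ‖ ≤ 2 * ((L : ℝ) - 1) / N := by
  classical
  have hN1 : 1 ≤ N := Nat.one_le_iff_ne_zero.mpr (NeZero.ne N)
  have hcosR : Real.cos ((p₁ - p₂) / 2) ≠ 0 := cos_ne_zero' N k₁ k₂ hN p₁ p₂ hp₁ hp₂
  have hinj : ∀ a b : ZMod N, kinkConfig N a = kinkConfig N b → a = b := kinkConfig_inj N hN
  set w : ℕ → ℂ := fun m => ∏ k ∈ S, (if k ≤ m then (1:ℂ) else -1) with hw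
  have hAs : ∀ (f : HS N) (s : Config N),
      A f s = (∏ k ∈ S, sgn (s (k : ZMod N))) * f s := by
    intro f s
    rw [hA]
    simp only [List.pure_def, List.bind_eq_flatMap]
    rw [flatMap_singleton_map]
    rw [prodX_apply, List.map_map]
    congr 1
    exact sort_prod S (fun k => sgn (s (k : ZMod N)))
  have hbk : braket N (momState N p₁) (A (momState N p₂))
      = (N : ℂ)⁻¹ * ∑ j ∈ Finset.range N,
          (starRingEnd ℂ) (Complex.exp (Complex.I * p₁ * ((j : ℂ) + 1))) *
            Complex.exp (Complex.I * p₂ * ((j : ℂ) + 1)) *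
            (∏ k ∈ S, sgn ((kinkConfig N ((j + 1 : ℕ) : ZMod N)) (k : ZMod N))) := by
    have h0 := braket_key N hinj p₁ p₂ (fun s => ∏ k ∈ S, sgn (s (k : ZMod N)))
    rw [← h0]
    show (∑ s : Config N, (starRingEnd ℂ) (momState N p₁ s) * (A (momState N p₂)) s) = _
    refine Finset.sum_congr rfl fun s _ => ?_
    rw [hAs]
  have hDval : ∀ j ∈ Finset.range N,
      (∏ k ∈ S, sgn ((kinkConfig N ((j + 1 : ℕ) : ZMod N)) (k : ZMod N)))
        = (-1 : ℂ) ^ (j + 1) * c * w (j + 1) := by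
    intro j hj
    have hj' : j < N := Finset.mem_range.mp hj
    rw [D_eq N hN L hLN S hS hScard (j + 1) (by omega) (by omega), hc]
  have habs1 : ∀ j : ℕ, ‖
      ((starRingEnd ℂ) (Complex.exp (Complex.I * p₁ * ((j : ℂ) + 1))) *
        Complex.exp (Complex.I * p₂ * ((j : ℂ) + 1)))‖ = 1 := by
    intro j
    have he : ∀ p : ℝ, ‖Complex.exp (Complex.I * p * ((j : ℂ) + 1))‖ = 1 := by
      intro p
      rw [show Complex.I * p * ((j : ℂ) + 1) = ((p * ((j : ℝ) + 1) : ℝ) : ℂ) * Complex.I from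
        by push_cast; ring]
      exact Complex.norm_exp_ofReal_mul_I _
    rw [norm_mul, Complex.norm_conj, he, he, one_mul]
  have hcabs : ‖c‖ = 1 := by
    rw [hc, norm_prod]
    refine Finset.prod_eq_one fun k _ => ?_
    rw [norm_pow]
    simp
  have hwabs : ∀ m : ℕ, ‖w m - 1‖ ≤ 2 := by
    intro m
    have h1 : ‖w m‖ = 1 := by
      rw [hw, norm_prod]
      refine Finset.prod_eq_one fun k _ => ?_
      split_ifs <;> simp
    calc ‖w m - 1‖ ≤ ‖w m‖ + ‖(-1 : ℂ)‖ := by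
          simpa [sub_eq_add_neg] using norm_add_le (w m) (-1)
      _ ≤ 2 := by rw [h1]; norm_num
  refine ⟨(N : ℂ)⁻¹ * ∑ j ∈ Finset.range N,
      (starRingEnd ℂ) (Complex.exp (Complex.I * p₁ * ((j : ℂ) + 1))) *
        Complex.exp (Complex.I * p₂ * ((j : ℂ) + 1)) *
        ((-1 : ℂ) ^ (j + 1) * c * (w (j + 1) - 1)), ?_, ?_⟩
  · rw [hbk]
    rw [Finset.sum_congr rfl (fun j (hj : j ∈ Finset.range N) => show
        (starRingEnd ℂ) (Complex.exp (Complex.I * p₁ * ((j : ℂ) + 1))) *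
          Complex.exp (Complex.I * p₂ * ((j : ℂ) + 1)) *
          (∏ k ∈ S, sgn ((kinkConfig N ((j + 1 : ℕ) : ZMod N)) (k : ZMod N)))
        = (starRingEnd ℂ) (Complex.exp (Complex.I * p₁ * ((j : ℂ) + 1))) *
            Complex.exp (Complex.I * p₂ * ((j : ℂ) + 1)) * (c * (-1 : ℂ) ^ (j + 1))
          + (starRingEnd ℂ) (Complex.exp (Complex.I * p₁ * ((j : ℂ) + 1))) *
              Complex.exp (Complex.I * p₂ * ((j : ℂ) + 1)) *
              ((-1 : ℂ) ^ (j + 1) * c * (w (j + 1) - 1)) from by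
          rw [hDval j hj]; ring)]
    rw [Finset.sum_add_distrib, mul_add]
    rw [main_term N hN k₁ k₂ p₁ p₂ hp₁ hp₂ hcosR c]
  · have hterm : ∀ j ∈ Finset.range N, ‖
        ((starRingEnd ℂ) (Complex.exp (Complex.I * p₁ * ((j : ℂ) + 1))) *
          Complex.exp (Complex.I * p₂ * ((j : ℂ) + 1)) *
          ((-1 : ℂ) ^ (j + 1) * c * (w (j + 1) - 1)))‖
        ≤ (if j + 1 < L then (2 : ℝ) else 0) := by
      intro j _
      by_cases hLj : j + 1 < L
      · rw [if_pos hLj, norm_mul, habs1, one_mul, norm_mul, norm_mul, norm_pow, hcabs]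
        simpa using hwabs (j + 1)
      · rw [if_neg hLj]
        have hw1 : w (j + 1) = 1 := by
          rw [hw]
          refine Finset.prod_eq_one fun k hk => ?_
          have := (Finset.mem_Icc.mp (hS hk)).2
          rw [if_pos (by omega)]
        rw [hw1]
        simp
    have hNR : (0 : ℝ) < N := by exact_mod_cast Nat.pos_of_ne_zero (NeZero.ne N)
    calc ‖(N : ℂ)⁻¹ * ∑ j ∈ Finset.range N,
          (starRingEnd ℂ) (Complex.exp (Complex.I * p₁ * ((j : ℂ) + 1))) *
            Complex.exp (Complex.I * p₂ * ((j : ℂ) + 1)) *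
            ((-1 : ℂ) ^ (j + 1) * c * (w (j + 1) - 1))‖
        = (N : ℝ)⁻¹ * ‖∑ j ∈ Finset.range N,
            (starRingEnd ℂ) (Complex.exp (Complex.I * p₁ * ((j : ℂ) + 1))) *
              Complex.exp (Complex.I * p₂ * ((j : ℂ) + 1)) *
              ((-1 : ℂ) ^ (j + 1) * c * (w (j + 1) - 1))‖ := by
          rw [norm_mul, norm_inv, Complex.norm_natCast]
      _ ≤ (N : ℝ)⁻¹ * ∑ j ∈ Finset.range N, (if j + 1 < L then (2 : ℝ) else 0) := by
          refine mul_le_mul_of_nonneg_left ?_ (by positivity)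
          exact (norm_sum_le _ _).trans (Finset.sum_le_sum hterm)
      _ = (N : ℝ)⁻¹ * (2 * ((L : ℝ) - 1)) := by
          congr 1
          rw [← Finset.sum_subset (Finset.range_subset_range.mpr (show L - 1 ≤ N by omega))
            (fun x _ hx => by
              rw [if_neg]
              simp only [Finset.mem_range] at hx
              omega)]
          rw [Finset.sum_congr rfl (fun j hj => if_pos (by
            have := Finset.mem_range.mp hj; omega : j + 1 < L))]
          rw [Finset.sum_const, Finset.card_range, nsmul_eq_mul]
          rw [Nat.cast_sub hL1]
          push_cast
          ring
      _ = 2 * ((L : ℝ) - 1) / N := by field_simp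


end SpinChain
end
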